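/- If conditions (a), (b), (c) all hold, then n ≥ 2 and n + 1 ≤ k ≤ 2n − 1 (in particular k ≥ 3). -/

import Mathlib

/-- The map `Ψ(a) = (e^{i⟨ξ₁,a⟩}, …, e^{i⟨ξ_n,a⟩})`. -/
noncomputable def psiMap {n k : ℕ} (ξ : Fin n → Fin k → ℝ) (a : Fin k → ℝ) : Fin n → ℂ :=
  fun j => Complex.exp (Complex.I * Complex.ofReal (∑ i, ξ j i * a i))

/-- The subspace `{η₁,…,η_n}^⊥ = {a ∈ ℝ^k : ⟨η_j, a⟩ = 0 for all j}`. -/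
def perpSet {n k : ℕ} (η : Fin n → Fin k → ℝ) : Set (Fin k → ℝ) :=
  {a | ∀ j, ∑ i, η j i * a i = 0}

/-- The `n`-torus `𝕋ⁿ ⊆ ℂⁿ`. -/
def torusSet (n : ℕ) : Set (Fin n → ℂ) := {z | ∀ j, ‖z j‖ = 1}

/-- If conditions (a), (b), (c) all hold, then `n ≥ 2` and `n + 1 ≤ k ≤ 2n − 1`
(in particular `k ≥ 3`). -/
theorem statement13 (n k : ℕ) (hn : 0 < n) (hk : 0 < k) (ξ η : Fin n → Fin k → ℝ)
    (ha : Submodule.span ℝ (Set.range ξ ∪ Set.range η) = ⊤)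
    (hb : LinearIndependent ℝ η)
    (hc₁ : Set.InjOn (psiMap ξ) (perpSet η))
    (hc₂ : torusSet n ⊆ closure (psiMap ξ '' perpSet η))
    (hc₃ : psiMap ξ '' perpSet η ≠ torusSet n) :
    2 ≤ n ∧ n + 1 ≤ k ∧ k ≤ 2 * n - 1 := by
  classical
  set L : (Fin k → ℝ) →ₗ[ℝ] (Fin n → ℝ) := Matrix.mulVecLin (Matrix.of η) with hLdef
  have hperp : perpSet η = (LinearMap.ker L : Submodule ℝ (Fin k → ℝ)) := by
    ext a
    simp only [perpSet, Set.mem_setOf_eq, SetLike.mem_coe, LinearMap.mem_ker, hLdef,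
      Matrix.mulVecLin_apply, funext_iff]
    rfl
  -- rank of η matrix is n
  have hrank : (Matrix.of η).rank = n := by
    rw [← Matrix.rank_transpose]
    unfold Matrix.rank
    rw [Matrix.range_mulVecLin]
    change Module.finrank ℝ (Submodule.span ℝ (Set.range (Matrix.of η : Matrix (Fin n) (Fin k) ℝ))) = n
    have : Set.range (Matrix.of η : Matrix (Fin n) (Fin k) ℝ) = Set.range η := rfl
    rw [this, finrank_span_eq_card hb, Fintype.card_fin]
  have hrangetop : LinearMap.range L = ⊤ := by
    apply Submodule.eq_top_of_finrank_eq
    have : Module.finrank ℝ (LinearMap.range L) = (Matrix.of η).rank := rfl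
    rw [this, hrank]
    simp [Module.finrank_pi]
  have hdim : Module.finrank ℝ (LinearMap.ker L) + n = k := by
    have h1 := LinearMap.finrank_range_add_finrank_ker L
    rw [hrangetop] at h1
    have h2 : Module.finrank ℝ (⊤ : Submodule ℝ (Fin n → ℝ)) = n := by
      simp [Module.finrank_pi]
    have h3 : Module.finrank ℝ (Fin k → ℝ) = k := by simp [Module.finrank_pi]
    omega
  -- the ξ map restricted to the kernel
  set F : (LinearMap.ker L) →ₗ[ℝ] (Fin n → ℝ) :=
    (Matrix.mulVecLin (Matrix.of ξ)).comp (LinearMap.ker L).subtype with hFdef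
  have hFinj : Function.Injective F := by
    intro x y hxy
    apply Subtype.ext
    apply hc₁ (by rw [hperp]; exact x.2) (by rw [hperp]; exact y.2)
    funext j
    have : (∑ i, ξ j i * (x : Fin k → ℝ) i) = ∑ i, ξ j i * (y : Fin k → ℝ) i :=
      congr_fun hxy j
    simp only [psiMap, this]
  have hle : Module.finrank ℝ (LinearMap.ker L) ≤ n := by
    have := LinearMap.finrank_le_finrank_of_injective hFinj
    simpa [Module.finrank_pi] using this
  -- kernel is nontrivial (else the image is a point, not dense)
  have hne0 : Module.finrank ℝ (LinearMap.ker L) ≠ 0 := by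
    intro h0
    have hbot : LinearMap.ker L = ⊥ := Submodule.finrank_eq_zero.mp h0
    have hps : perpSet η = {0} := by
      rw [hperp, hbot]; simp
    have hz : (fun _ : Fin n => (-1 : ℂ)) ∈ torusSet n := by
      intro j; simp
    have := hc₂ hz
    rw [hps, Set.image_singleton] at this
    have hcl : closure {psiMap ξ 0} = {psiMap ξ 0} := closure_singleton
    rw [hcl] at this
    have heq : (fun _ : Fin n => (-1 : ℂ)) = psiMap ξ 0 := this
    have := congr_fun heq ⟨0, hn⟩
    simp [psiMap] at this
    norm_num at this
  -- kernel has dimension < n (else the image is the whole torus)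
  have hnen : Module.finrank ℝ (LinearMap.ker L) ≠ n := by
    intro hfr
    have hsurj : Function.Surjective F := by
      rw [← LinearMap.range_eq_top,
        ← LinearMap.ker_eq_bot_iff_range_eq_top_of_finrank_eq_finrank
          (by rw [hfr]; simp [Module.finrank_pi])]
      exact LinearMap.ker_eq_bot.mpr hFinj
    apply hc₃
    apply Set.Subset.antisymm
    · rintro z ⟨a, _, rfl⟩ j
      simp [psiMap, Complex.norm_exp]
    · intro z hz
      obtain ⟨⟨a, haK⟩, hFa⟩ := hsurj (fun j => (z j).arg)
      refine ⟨a, by rw [hperp]; exact haK, ?_⟩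
      funext j
      have h1 : (∑ i, ξ j i * a i) = (z j).arg := congr_fun hFa j
      have h2 := Complex.norm_mul_exp_arg_mul_I (z j)
      rw [hz j] at h2
      simp only [Complex.ofReal_one, one_mul] at h2
      show Complex.exp (Complex.I * ((∑ i, ξ j i * a i : ℝ) : ℂ)) = z j
      rw [h1, mul_comm, h2]
  have h2n : 2 ≤ n := by omega
  exact ⟨h2n, by omega, by omega⟩
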